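/- (Algebraic core of the uniqueness theorem for characteristic holonomy su_c(2).) Let a, b, p ∈ ℝ, let T := aφ + b·e₅₆₇, and let Q₁ := −e₁₄−e₂₃+2e₅₇, Q₂ := −e₁₃+e₂₄+2e₆₇, Q₃ := e₁₂+e₃₄−2e₅₆. Then the 8×8 matrix σ(T)² + p(σ(Q₁)² + σ(Q₂)² + σ(Q₃)²) is a scalar multiple of the identity if and only if (a = 0 and p = 0) or (p = a² and 5a + b = 0). (This is the Bianchi identity 'T² + R^c is a scalar in the Clifford algebra' for the curvature operator R^c = p(Q₁⊗Q₁ + Q₂⊗Q₂ + Q₃⊗Q₃), quantized in the Clifford algebra as p·Σ_i σ(Q_i)σ(Q_i).) -/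

import Mathlib

open Matrix BigOperators

noncomputable section

abbrev M8 : Type := Matrix (Fin 8) (Fin 8) ℝ

/-- 2-forms on ℝ⁷ -/
abbrev Lam2 : Type := AlternatingMap ℝ (Fin 7 → ℝ) ℝ (Fin 2)

/-- 3-forms on ℝ⁷ -/
abbrev Lam3 : Type := AlternatingMap ℝ (Fin 7 → ℝ) ℝ (Fin 3)

/-- standard basis of ℝ⁷ -/
def u (i : Fin 7) : Fin 7 → ℝ := Pi.single i 1

/-- standard spinor basis ψ₁,…,ψ₈ (0-indexed) -/
def ψ (k : Fin 8) : Fin 8 → ℝ := Pi.single k 1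

/-- E_{ij} : ψ_i ↦ ψ_j, ψ_j ↦ -ψ_i -/
def EE (i j : Fin 8) : M8 := Matrix.single j i 1 - Matrix.single i j 1

/-- Clifford multiplication by e₁,…,e₇ (0-indexed) -/
def e : Fin 7 → M8 :=
  ![EE 0 7 + EE 1 6 - EE 2 5 - EE 3 4,
    -EE 0 6 + EE 1 7 + EE 2 4 - EE 3 5,
    -EE 0 5 + EE 1 4 - EE 2 7 + EE 3 6,
    -EE 0 4 - EE 1 5 - EE 2 6 - EE 3 7,
    -EE 0 2 - EE 1 3 + EE 4 6 + EE 5 7,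
    EE 0 3 - EE 1 2 - EE 4 7 + EE 5 6,
    EE 0 1 - EE 2 3 - EE 4 5 + EE 6 7]

def pick2 (i j : Fin 7) : (Fin 7 → ℝ) →ₗ[ℝ] (Fin 2 → ℝ) :=
  LinearMap.pi fun m => LinearMap.proj (![i, j] m)

def pick3 (i j k : Fin 7) : (Fin 7 → ℝ) →ₗ[ℝ] (Fin 3 → ℝ) :=
  LinearMap.pi fun m => LinearMap.proj (![i, j, k] m)

/-- the 2-form e_i ∧ e_j -/
def w2 (i j : Fin 7) : Lam2 :=
  (Matrix.detRowAlternating : AlternatingMap ℝ (Fin 2 → ℝ) ℝ (Fin 2)).compLinearMap (pick2 i j)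

/-- the 3-form e_i ∧ e_j ∧ e_k -/
def w3 (i j k : Fin 7) : Lam3 :=
  (Matrix.detRowAlternating : AlternatingMap ℝ (Fin 3 → ℝ) ℝ (Fin 3)).compLinearMap (pick3 i j k)

/-- Clifford action of a 2-form -/
def σ2 (ω : Lam2) : M8 :=
  ∑ i : Fin 7, ∑ j : Fin 7, if i < j then ω ![u i, u j] • (e i * e j) else 0

/-- Clifford action of a 3-form -/
def σ3 (T : Lam3) : M8 :=
  ∑ i : Fin 7, ∑ j : Fin 7, ∑ k : Fin 7,
    if i < j ∧ j < k then T ![u i, u j, u k] • (e i * e j * e k) else 0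

/-- the skew-symmetric 7×7 matrix A_ω associated to a 2-form ω -/
def A2 (ω : Lam2) : Matrix (Fin 7) (Fin 7) ℝ :=
  ∑ i : Fin 7, ∑ j : Fin 7,
    if i < j then ω ![u i, u j] •
      (Matrix.single j i (1 : ℝ) - Matrix.single i j 1) else 0

/-- T is ω-invariant: the natural action of the 2-form ω on the 3-form T vanishes -/
def inv3 (ω : Lam2) (T : Lam3) : Prop :=
  ∀ X Y Z : Fin 7 → ℝ,
    T ![A2 ω *ᵥ X, Y, Z] + T ![X, A2 ω *ᵥ Y, Z] + T ![X, Y, A2 ω *ᵥ Z] = 0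

/-- the standard G₂ 3-form φ = e₁₂₇+e₁₃₅−e₁₄₆−e₂₃₆−e₂₄₅+e₃₄₇+e₅₆₇ -/
def φf : Lam3 :=
  w3 0 1 6 + w3 0 2 4 - w3 0 3 5 - w3 1 2 5 - w3 1 3 4 + w3 2 3 6 + w3 4 5 6

def Q1f : Lam2 := -w2 0 3 - w2 1 2 + (2:ℝ) • w2 4 6
def Q2f : Lam2 := -w2 0 2 + w2 1 3 + (2:ℝ) • w2 5 6
def Q3f : Lam2 := w2 0 1 + w2 2 3 - (2:ℝ) • w2 4 5



-- vector-literal evaluation helpers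
@[simp] lemma v8_4 {α : Type*} (x0 x1 x2 x3 x4 x5 x6 x7 : α) :
    (![x0,x1,x2,x3,x4,x5,x6,x7] : Fin 8 → α) 4 = x4 := rfl
@[simp] lemma v8_5 {α : Type*} (x0 x1 x2 x3 x4 x5 x6 x7 : α) :
    (![x0,x1,x2,x3,x4,x5,x6,x7] : Fin 8 → α) 5 = x5 := rfl
@[simp] lemma v8_6 {α : Type*} (x0 x1 x2 x3 x4 x5 x6 x7 : α) :
    (![x0,x1,x2,x3,x4,x5,x6,x7] : Fin 8 → α) 6 = x6 := rfl
@[simp] lemma v8_7 {α : Type*} (x0 x1 x2 x3 x4 x5 x6 x7 : α) :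
    (![x0,x1,x2,x3,x4,x5,x6,x7] : Fin 8 → α) 7 = x7 := rfl

lemma w2_eval (i j : Fin 7) (X Y : Fin 7 → ℝ) :
    w2 i j ![X, Y] = X i * Y j - X j * Y i := by
  have h : w2 i j ![X, Y]
      = Matrix.det (Matrix.of fun m n => (![X, Y] m) (![i, j] n)) := rfl
  rw [h, Matrix.det_fin_two]; simp

lemma w3_eval (i j k : Fin 7) (X Y Z : Fin 7 → ℝ) :
    w3 i j k ![X, Y, Z] =
      X i * Y j * Z k - X i * Y k * Z j - X j * Y i * Z k
        + X j * Y k * Z i + X k * Y i * Z j - X k * Y j * Z i := by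
  have h : w3 i j k ![X, Y, Z]
      = Matrix.det (Matrix.of fun m n => (![X, Y, Z] m) (![i, j, k] n)) := rfl
  rw [h, Matrix.det_fin_three]; simp


set_option maxHeartbeats 1600000 in
lemma P016 : e 0 * e 1 * e 6 = Matrix.diagonal ![-1, -1, 1, 1, 1, 1, -1, -1] := by
  have hi : e 0 = EE 0 7 + EE 1 6 - EE 2 5 - EE 3 4 := rfl
  have hj : e 1 = -EE 0 6 + EE 1 7 + EE 2 4 - EE 3 5 := rfl
  have hk : e 6 = EE 0 1 - EE 2 3 - EE 4 5 + EE 6 7 := rfl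
  rw [hi, hj, hk]
  simp only [EE, sub_mul, mul_sub, add_mul, mul_add, neg_mul, mul_neg, neg_sub, neg_neg,
    Matrix.single_mul_single_same, Matrix.single_mul_single_of_ne, ne_eq,
    Fin.reduceEq, not_false_eq_true, one_mul, zero_mul, mul_zero, zero_sub, sub_zero,
    zero_add, add_zero, neg_zero, mul_one]
  ext i j
  fin_cases i <;> fin_cases j <;>
    simp [Matrix.single, Matrix.diagonal] <;> norm_num


set_option maxHeartbeats 1600000 in
lemma P024 : e 0 * e 2 * e 4 = Matrix.diagonal ![-1, 1, -1, 1, 1, -1, 1, -1] := by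
  have hi : e 0 = EE 0 7 + EE 1 6 - EE 2 5 - EE 3 4 := rfl
  have hj : e 2 = -EE 0 5 + EE 1 4 - EE 2 7 + EE 3 6 := rfl
  have hk : e 4 = -EE 0 2 - EE 1 3 + EE 4 6 + EE 5 7 := rfl
  rw [hi, hj, hk]
  simp only [EE, sub_mul, mul_sub, add_mul, mul_add, neg_mul, mul_neg, neg_sub, neg_neg,
    Matrix.single_mul_single_same, Matrix.single_mul_single_of_ne, ne_eq,
    Fin.reduceEq, not_false_eq_true, one_mul, zero_mul, mul_zero, zero_sub, sub_zero,
    zero_add, add_zero, neg_zero, mul_one]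
  ext i j
  fin_cases i <;> fin_cases j <;>
    simp [Matrix.single, Matrix.diagonal] <;> norm_num


set_option maxHeartbeats 1600000 in
lemma P035 : e 0 * e 3 * e 5 = Matrix.diagonal ![1, -1, -1, 1, 1, -1, -1, 1] := by
  have hi : e 0 = EE 0 7 + EE 1 6 - EE 2 5 - EE 3 4 := rfl
  have hj : e 3 = -EE 0 4 - EE 1 5 - EE 2 6 - EE 3 7 := rfl
  have hk : e 5 = EE 0 3 - EE 1 2 - EE 4 7 + EE 5 6 := rfl
  rw [hi, hj, hk]
  simp only [EE, sub_mul, mul_sub, add_mul, mul_add, neg_mul, mul_neg, neg_sub, neg_neg,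
    Matrix.single_mul_single_same, Matrix.single_mul_single_of_ne, ne_eq,
    Fin.reduceEq, not_false_eq_true, one_mul, zero_mul, mul_zero, zero_sub, sub_zero,
    zero_add, add_zero, neg_zero, mul_one]
  ext i j
  fin_cases i <;> fin_cases j <;>
    simp [Matrix.single, Matrix.diagonal] <;> norm_num


set_option maxHeartbeats 1600000 in
lemma P125 : e 1 * e 2 * e 5 = Matrix.diagonal ![1, -1, -1, 1, -1, 1, 1, -1] := by
  have hi : e 1 = -EE 0 6 + EE 1 7 + EE 2 4 - EE 3 5 := rfl
  have hj : e 2 = -EE 0 5 + EE 1 4 - EE 2 7 + EE 3 6 := rfl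
  have hk : e 5 = EE 0 3 - EE 1 2 - EE 4 7 + EE 5 6 := rfl
  rw [hi, hj, hk]
  simp only [EE, sub_mul, mul_sub, add_mul, mul_add, neg_mul, mul_neg, neg_sub, neg_neg,
    Matrix.single_mul_single_same, Matrix.single_mul_single_of_ne, ne_eq,
    Fin.reduceEq, not_false_eq_true, one_mul, zero_mul, mul_zero, zero_sub, sub_zero,
    zero_add, add_zero, neg_zero, mul_one]
  ext i j
  fin_cases i <;> fin_cases j <;>
    simp [Matrix.single, Matrix.diagonal] <;> norm_num


set_option maxHeartbeats 1600000 in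
lemma P134 : e 1 * e 3 * e 4 = Matrix.diagonal ![1, -1, 1, -1, 1, -1, 1, -1] := by
  have hi : e 1 = -EE 0 6 + EE 1 7 + EE 2 4 - EE 3 5 := rfl
  have hj : e 3 = -EE 0 4 - EE 1 5 - EE 2 6 - EE 3 7 := rfl
  have hk : e 4 = -EE 0 2 - EE 1 3 + EE 4 6 + EE 5 7 := rfl
  rw [hi, hj, hk]
  simp only [EE, sub_mul, mul_sub, add_mul, mul_add, neg_mul, mul_neg, neg_sub, neg_neg,
    Matrix.single_mul_single_same, Matrix.single_mul_single_of_ne, ne_eq,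
    Fin.reduceEq, not_false_eq_true, one_mul, zero_mul, mul_zero, zero_sub, sub_zero,
    zero_add, add_zero, neg_zero, mul_one]
  ext i j
  fin_cases i <;> fin_cases j <;>
    simp [Matrix.single, Matrix.diagonal] <;> norm_num


set_option maxHeartbeats 1600000 in
lemma P236 : e 2 * e 3 * e 6 = Matrix.diagonal ![-1, -1, 1, 1, -1, -1, 1, 1] := by
  have hi : e 2 = -EE 0 5 + EE 1 4 - EE 2 7 + EE 3 6 := rfl
  have hj : e 3 = -EE 0 4 - EE 1 5 - EE 2 6 - EE 3 7 := rfl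
  have hk : e 6 = EE 0 1 - EE 2 3 - EE 4 5 + EE 6 7 := rfl
  rw [hi, hj, hk]
  simp only [EE, sub_mul, mul_sub, add_mul, mul_add, neg_mul, mul_neg, neg_sub, neg_neg,
    Matrix.single_mul_single_same, Matrix.single_mul_single_of_ne, ne_eq,
    Fin.reduceEq, not_false_eq_true, one_mul, zero_mul, mul_zero, zero_sub, sub_zero,
    zero_add, add_zero, neg_zero, mul_one]
  ext i j
  fin_cases i <;> fin_cases j <;>
    simp [Matrix.single, Matrix.diagonal] <;> norm_num


set_option maxHeartbeats 1600000 in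
lemma P456 : e 4 * e 5 * e 6 = Matrix.diagonal ![-1, -1, -1, -1, 1, 1, 1, 1] := by
  have hi : e 4 = -EE 0 2 - EE 1 3 + EE 4 6 + EE 5 7 := rfl
  have hj : e 5 = EE 0 3 - EE 1 2 - EE 4 7 + EE 5 6 := rfl
  have hk : e 6 = EE 0 1 - EE 2 3 - EE 4 5 + EE 6 7 := rfl
  rw [hi, hj, hk]
  simp only [EE, sub_mul, mul_sub, add_mul, mul_add, neg_mul, mul_neg, neg_sub, neg_neg,
    Matrix.single_mul_single_same, Matrix.single_mul_single_of_ne, ne_eq,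
    Fin.reduceEq, not_false_eq_true, one_mul, zero_mul, mul_zero, zero_sub, sub_zero,
    zero_add, add_zero, neg_zero, mul_one]
  ext i j
  fin_cases i <;> fin_cases j <;>
    simp [Matrix.single, Matrix.diagonal] <;> norm_num


set_option maxHeartbeats 2000000 in
lemma sigma3_T (a b : ℝ) :
    σ3 (a • φf + b • w3 4 5 6) =
      Matrix.diagonal ![-(7*a)-b, a-b, a-b, a-b, a+b, a+b, a+b, a+b] := by
  rw [σ3]
  simp only [Fin.sum_univ_seven]
  simp only [Fin.reduceLT, and_true, true_and, and_false, false_and, and_self,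
    if_true, if_false, ite_true, ite_false, add_zero, zero_add]
  simp only [φf, AlternatingMap.add_apply, AlternatingMap.sub_apply,
    AlternatingMap.neg_apply, AlternatingMap.smul_apply, w3_eval, u, Pi.single_apply,
    Fin.reduceEq, if_true, if_false, ite_true, ite_false, smul_eq_mul,
    mul_one, mul_zero, zero_mul, one_mul, sub_zero, zero_sub, add_zero, zero_add, neg_zero,
    mul_neg, neg_neg, neg_mul]
  norm_num
  rw [P016, P024, P035, P125, P134, P236, P456]
  ext i j
  fin_cases i <;> fin_cases j <;>
    simp [Matrix.diagonal] <;> ring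


set_option maxHeartbeats 8000000 in
lemma SQ1 : σ2 Q1f ^ 2 = Matrix.diagonal ![0, -16, -16, 0, -4, -4, -4, -4] := by
  rw [sq, σ2]
  simp only [Fin.sum_univ_seven]
  simp only [Fin.reduceLT, if_true, if_false, ite_true, ite_false, add_zero, zero_add]
  simp only [Q1f, AlternatingMap.add_apply, AlternatingMap.sub_apply,
    AlternatingMap.neg_apply, AlternatingMap.smul_apply, w2_eval, u, Pi.single_apply,
    Fin.reduceEq, if_true, if_false, ite_true, ite_false, smul_eq_mul,
    mul_one, mul_zero, zero_mul, one_mul, sub_zero, zero_sub, add_zero, zero_add, neg_zero,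
    mul_neg, neg_neg, neg_mul]
  norm_num
  have h03a : e 0 = EE 0 7 + EE 1 6 - EE 2 5 - EE 3 4 := rfl
  have h03b : e 3 = -EE 0 4 - EE 1 5 - EE 2 6 - EE 3 7 := rfl
  have h12a : e 1 = -EE 0 6 + EE 1 7 + EE 2 4 - EE 3 5 := rfl
  have h12b : e 2 = -EE 0 5 + EE 1 4 - EE 2 7 + EE 3 6 := rfl
  have h46a : e 4 = -EE 0 2 - EE 1 3 + EE 4 6 + EE 5 7 := rfl
  have h46b : e 6 = EE 0 1 - EE 2 3 - EE 4 5 + EE 6 7 := rfl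
  rw [h03a, h03b, h12a, h12b, h46a, h46b]
  simp only [EE, two_mul, two_smul, smul_mul_assoc, mul_smul_comm, smul_add, smul_sub, smul_neg,
    sub_mul, mul_sub, add_mul, mul_add, neg_mul, mul_neg, neg_sub, neg_neg, neg_add,
    Matrix.single_mul_single_same, Matrix.single_mul_single_of_ne, ne_eq,
    Fin.reduceEq, not_false_eq_true, one_mul, zero_mul, mul_zero, zero_sub, sub_zero,
    zero_add, add_zero, neg_zero, mul_one, smul_zero]
  ext i j
  fin_cases i <;> fin_cases j <;>
    simp [Matrix.single, Matrix.diagonal] <;> norm_num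


set_option maxHeartbeats 8000000 in
lemma SQ2 : σ2 Q2f ^ 2 = Matrix.diagonal ![0, -16, 0, -16, -4, -4, -4, -4] := by
  rw [sq, σ2]
  simp only [Fin.sum_univ_seven]
  simp only [Fin.reduceLT, if_true, if_false, ite_true, ite_false, add_zero, zero_add]
  simp only [Q2f, AlternatingMap.add_apply, AlternatingMap.sub_apply,
    AlternatingMap.neg_apply, AlternatingMap.smul_apply, w2_eval, u, Pi.single_apply,
    Fin.reduceEq, if_true, if_false, ite_true, ite_false, smul_eq_mul,
    mul_one, mul_zero, zero_mul, one_mul, sub_zero, zero_sub, add_zero, zero_add, neg_zero,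
    mul_neg, neg_neg, neg_mul]
  norm_num
  have h02a : e 0 = EE 0 7 + EE 1 6 - EE 2 5 - EE 3 4 := rfl
  have h02b : e 2 = -EE 0 5 + EE 1 4 - EE 2 7 + EE 3 6 := rfl
  have h13a : e 1 = -EE 0 6 + EE 1 7 + EE 2 4 - EE 3 5 := rfl
  have h13b : e 3 = -EE 0 4 - EE 1 5 - EE 2 6 - EE 3 7 := rfl
  have h56a : e 5 = EE 0 3 - EE 1 2 - EE 4 7 + EE 5 6 := rfl
  have h56b : e 6 = EE 0 1 - EE 2 3 - EE 4 5 + EE 6 7 := rfl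
  rw [h02a, h02b, h13a, h13b, h56a, h56b]
  simp only [EE, two_mul, two_smul, smul_mul_assoc, mul_smul_comm, smul_add, smul_sub, smul_neg,
    sub_mul, mul_sub, add_mul, mul_add, neg_mul, mul_neg, neg_sub, neg_neg, neg_add,
    Matrix.single_mul_single_same, Matrix.single_mul_single_of_ne, ne_eq,
    Fin.reduceEq, not_false_eq_true, one_mul, zero_mul, mul_zero, zero_sub, sub_zero,
    zero_add, add_zero, neg_zero, mul_one, smul_zero]
  ext i j
  fin_cases i <;> fin_cases j <;>
    simp [Matrix.single, Matrix.diagonal] <;> norm_num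


set_option maxHeartbeats 8000000 in
lemma SQ3 : σ2 Q3f ^ 2 = Matrix.diagonal ![0, 0, -16, -16, -4, -4, -4, -4] := by
  rw [sq, σ2]
  simp only [Fin.sum_univ_seven]
  simp only [Fin.reduceLT, if_true, if_false, ite_true, ite_false, add_zero, zero_add]
  simp only [Q3f, AlternatingMap.add_apply, AlternatingMap.sub_apply,
    AlternatingMap.neg_apply, AlternatingMap.smul_apply, w2_eval, u, Pi.single_apply,
    Fin.reduceEq, if_true, if_false, ite_true, ite_false, smul_eq_mul,
    mul_one, mul_zero, zero_mul, one_mul, sub_zero, zero_sub, add_zero, zero_add, neg_zero,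
    mul_neg, neg_neg, neg_mul]
  norm_num
  have h01a : e 0 = EE 0 7 + EE 1 6 - EE 2 5 - EE 3 4 := rfl
  have h01b : e 1 = -EE 0 6 + EE 1 7 + EE 2 4 - EE 3 5 := rfl
  have h23a : e 2 = -EE 0 5 + EE 1 4 - EE 2 7 + EE 3 6 := rfl
  have h23b : e 3 = -EE 0 4 - EE 1 5 - EE 2 6 - EE 3 7 := rfl
  have h45a : e 4 = -EE 0 2 - EE 1 3 + EE 4 6 + EE 5 7 := rfl
  have h45b : e 5 = EE 0 3 - EE 1 2 - EE 4 7 + EE 5 6 := rfl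
  rw [h01a, h01b, h23a, h23b, h45a, h45b]
  simp only [EE, two_mul, two_smul, smul_mul_assoc, mul_smul_comm, smul_add, smul_sub, smul_neg,
    sub_mul, mul_sub, add_mul, mul_add, neg_mul, mul_neg, neg_sub, neg_neg, neg_add,
    Matrix.single_mul_single_same, Matrix.single_mul_single_of_ne, ne_eq,
    Fin.reduceEq, not_false_eq_true, one_mul, zero_mul, mul_zero, zero_sub, sub_zero,
    zero_add, add_zero, neg_zero, mul_one, smul_zero]
  ext i j
  fin_cases i <;> fin_cases j <;>
    simp [Matrix.single, Matrix.diagonal] <;> norm_num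


set_option maxHeartbeats 1000000 in
lemma key (a b p : ℝ) :
    σ3 (a • φf + b • w3 4 5 6) ^ 2
        + p • (σ2 Q1f ^ 2 + σ2 Q2f ^ 2 + σ2 Q3f ^ 2) =
      Matrix.diagonal ![(7*a+b)^2, (a-b)^2 - 32*p, (a-b)^2 - 32*p, (a-b)^2 - 32*p,
        (a+b)^2 - 12*p, (a+b)^2 - 12*p, (a+b)^2 - 12*p, (a+b)^2 - 12*p] := by
  rw [sigma3_T, sq, Matrix.diagonal_mul_diagonal, SQ1, SQ2, SQ3]
  ext i j
  fin_cases i <;> fin_cases j <;> simp [Matrix.diagonal] <;> ring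

lemma smul_one_diag (lam : ℝ) : lam • (1 : M8) = Matrix.diagonal (fun _ => lam) := by
  ext i j
  by_cases h : i = j <;>
    simp [Matrix.diagonal, Matrix.one_apply, h]

theorem stmt_14 (a b p : ℝ) :
    (∃ lam : ℝ,
        σ3 (a • φf + b • w3 4 5 6) ^ 2
          + p • (σ2 Q1f ^ 2 + σ2 Q2f ^ 2 + σ2 Q3f ^ 2) = lam • (1 : M8))
      ↔ ((a = 0 ∧ p = 0) ∨ (p = a ^ 2 ∧ 5 * a + b = 0)) := by
  rw [key]
  constructor
  · rintro ⟨lam, h⟩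
    rw [smul_one_diag, Matrix.diagonal_eq_diagonal_iff] at h
    have h0 := h 0
    have h1 := h 1
    have h4 := h 4
    simp at h0 h1 h4
    have hp : p = a ^ 2 := by nlinarith [h0, h1, h4]
    have hab : a * (5 * a + b) = 0 := by nlinarith [h0, h1, h4]
    rcases mul_eq_zero.mp hab with ha | hb
    · left
      refine ⟨ha, ?_⟩
      rw [hp, ha]; ring
    · right; exact ⟨hp, hb⟩
  · rintro (⟨ha, hp⟩ | ⟨hp, hb⟩)
    · refine ⟨b ^ 2, ?_⟩
      rw [smul_one_diag, Matrix.diagonal_eq_diagonal_iff]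
      subst ha hp
      intro i
      fin_cases i <;> simp <;> ring
    · refine ⟨4 * a ^ 2, ?_⟩
      rw [smul_one_diag, Matrix.diagonal_eq_diagonal_iff]
      have hb' : b = -(5 * a) := by linarith
      subst hp hb'
      intro i
      fin_cases i <;> simp <;> ring
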